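/- Let n ≥ 1 and 0 < d < n, and let Γ ⊆ ℝ^n be a nonempty closed d-Ahlfors regular set with constant 𝒜, with measure σ = ℋ^d restricted to Γ. Let 0 < s ≤ 1 and d/(d+s) < p < 1, and set θ = s + d − d/p. Then there is a constant C, depending only on n, d, s, p, and 𝒜, such that for every finite family of blocks a_k in Δ(z_k, ϱ_k) (z_k ∈ Γ, ϱ_k > 0) and real coefficients λ_k, k ∈ F with F finite: ‖ ∑_{k∈F} λ_k a_k ‖_{Λ^{θ,1}(Γ)} ≤ C ( ∑_{k∈F} |λ_k|^p ϱ_k^{d − dp/2 − sp} )^{1/p}. (This is the quantitative form of the embedding of the atomic space Ȧ^{s,p}(Γ) into the Slobodeckij space Λ^{θ,1}(Γ).) -/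

import Mathlib

open MeasureTheory Metric Set ENNReal

noncomputable section

abbrev Eucl (n : ℕ) := EuclideanSpace ℝ (Fin n)

variable {n : ℕ}

/-- The `d`-dimensional surface measure on `Γ`: Hausdorff measure `ℋ^d` restricted to `Γ`. -/
def sMeasure (d : ℝ) (Γ : Set (Eucl n)) : Measure (Eucl n) := (μH[d]).restrict Γ

/-- `Γ` is `d`-Ahlfors regular with constant `𝒜`, for radii `r` with `ofReal r < R`. -/
def AhlforsRegularWithin (d 𝒜 : ℝ) (Γ : Set (Eucl n)) (R : ℝ≥0∞) : Prop :=
  ∀ x ∈ Γ, ∀ r : ℝ, 0 < r → ENNReal.ofReal r < R →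
    ENNReal.ofReal (𝒜⁻¹ * r ^ d) ≤ sMeasure d Γ (ball x r) ∧
      sMeasure d Γ (ball x r) ≤ ENNReal.ofReal (𝒜 * r ^ d)

/-- A block in `Δ(z,ϱ) = Γ ∩ B(z,ϱ)`. -/
def IsBlock (Γ : Set (Eucl n)) (d : ℝ) (z : Eucl n) (ϱ : ℝ) (a : Eucl n → ℝ) : Prop :=
  (∀ x, x ∉ Γ ∩ ball z ϱ → a x = 0) ∧
  (∀ x ∈ Γ, |a x| ≤ ϱ ^ (-(d / 2))) ∧
  (∀ x ∈ Γ, ∀ y ∈ Γ, |a x - a y| ≤ dist x y * ϱ ^ (-(d / 2) - 1))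

/-- The `p`-th power of the Slobodeckij seminorm (double integral). -/
def sloboInt (d s p : ℝ) (σ : Measure (Eucl n)) (f : Eucl n → ℝ) : ℝ≥0∞ :=
  ∫⁻ x, ∫⁻ y, ENNReal.ofReal (|f x - f y| ^ p / dist x y ^ (d + p * s)) ∂σ ∂σ


lemma aux_pack (hn : 1 ≤ n) {D : ℝ} (hD : 0 < D) {Γ : Set (Eucl n)} {x : Eucl n}
    (hΓ : Γ ⊆ closedBall x D) :
    ∃ t : Finset (Eucl n), ↑t ⊆ Γ ∧ t.card ≤ 16 ^ n ∧ Γ ⊆ ⋃ y ∈ t, ball y (D / 2) := by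
  haveI : Nonempty (Fin n) := ⟨⟨0, hn⟩⟩
  classical
  set v := volume (ball (0 : Eucl n) 1) with hv
  have hv0 : v ≠ 0 := (measure_ball_pos volume _ one_pos).ne'
  have hvt : v ≠ ⊤ := measure_ball_lt_top.ne
  have hball : ∀ (y : Eucl n) (r : ℝ), 0 ≤ r →
      volume (ball y r) = ENNReal.ofReal (r ^ n) * v := by
    intro y r hr
    rw [Measure.addHaar_ball volume y hr, finrank_euclideanSpace, Fintype.card_fin, hv]
  set P : Finset (Eucl n) → Prop :=
    fun t => ↑t ⊆ Γ ∧ (t : Set (Eucl n)).Pairwise fun u w => D / 4 ≤ dist u w with hPdef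
  have key : ∀ t, P t → t.card ≤ 16 ^ n := by
    rintro t ⟨ht1, ht2⟩
    have hdisj : (t : Set (Eucl n)).PairwiseDisjoint fun y => ball y (D / 8) := by
      intro u hu w hw huw
      have h4 := ht2 hu hw huw
      exact ball_disjoint_ball (by linarith)
    have hsum : ∑ y ∈ t, volume (ball y (D / 8)) ≤ volume (ball x (2 * D)) := by
      rw [← measure_biUnion_finset hdisj fun _ _ => measurableSet_ball]
      refine measure_mono (Set.iUnion₂_subset fun y hy w hw => ?_)
      have hyx : dist y x ≤ D := hΓ (ht1 hy)
      have hwy : dist w y < D / 8 := mem_ball.mp hw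
      have : dist w x < 2 * D := by
        calc dist w x ≤ dist w y + dist y x := dist_triangle ..
        _ < D / 8 + D := by linarith
        _ ≤ 2 * D := by linarith
      exact mem_ball.mpr this
    have h8 : (0:ℝ) ≤ D / 8 := by linarith
    rw [hball x (2 * D) (by linarith)] at hsum
    have hsum2 : (t.card : ℝ≥0∞) * (ENNReal.ofReal ((D / 8) ^ n) * v)
        ≤ ENNReal.ofReal ((2 * D) ^ n) * v := by
      rw [← nsmul_eq_mul, ← Finset.sum_const,
        ← Finset.sum_congr rfl fun y (_ : y ∈ t) => hball y (D / 8) h8]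
      exact hsum
    rw [← mul_assoc] at hsum2
    have hsum3 : (t.card : ℝ≥0∞) * ENNReal.ofReal ((D / 8) ^ n)
        ≤ ENNReal.ofReal ((2 * D) ^ n) :=
      (ENNReal.mul_le_mul_iff_left hv0 hvt).mp hsum2
    have h16 : ((2 : ℝ) * D) ^ n = (16:ℝ) ^ n * (D / 8) ^ n := by
      rw [← mul_pow]; ring_nf
    rw [h16, ENNReal.ofReal_mul (by positivity)] at hsum3
    have h80 : ENNReal.ofReal ((D / 8) ^ n) ≠ 0 := by
      simp [ENNReal.ofReal_eq_zero, not_le]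
      positivity
    have hc : (t.card : ℝ≥0∞) ≤ ENNReal.ofReal ((16:ℝ) ^ n) :=
      (ENNReal.mul_le_mul_iff_left h80 ENNReal.ofReal_ne_top).mp
        hsum3
    have : ((16:ℝ) ^ n) = ((16 ^ n : ℕ) : ℝ) := by push_cast; ring
    rw [this, ENNReal.ofReal_natCast] at hc
    exact_mod_cast hc
  set Q : ℕ → Prop := fun m => ∃ t, P t ∧ t.card = m with hQdef
  have hQ0 : Q 0 := ⟨∅, ⟨by simp [hPdef], by simp [hPdef]⟩, rfl⟩
  have hspec : Q (Nat.findGreatest Q (16 ^ n)) :=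
    Nat.findGreatest_spec (Nat.zero_le _) hQ0
  obtain ⟨t, htP, htc⟩ := hspec
  refine ⟨t, htP.1, key t htP, ?_⟩
  intro u hu
  by_contra hcov
  have hfar : ∀ y ∈ t, D / 2 ≤ dist u y := by
    intro y hy
    have h2 : u ∉ ball y (D / 2) := fun h => hcov (Set.mem_biUnion hy h)
    simpa [mem_ball, not_lt] using h2
  have hut : u ∉ t := by
    intro h
    have := hfar u h
    rw [dist_self] at this
    linarith
  have hP' : P (insert u t) := by
    constructor
    · rw [Finset.coe_insert]
      exact Set.insert_subset hu htP.1
    · rw [Finset.coe_insert]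
      refine (fun hs hsym h => @Set.Pairwise.insert_of_symm _ _ _ _ ⟨hsym⟩ hs h) ?_ ?_ ?_
      · exact htP.2
      · intro a b hab
        rwa [dist_comm]
      · intro y hy _
        have := hfar y (by exact_mod_cast hy)
        linarith
  have hcard : (insert u t).card = Nat.findGreatest Q (16 ^ n) + 1 := by
    rw [Finset.card_insert_of_notMem hut, htc]
  have hle : Nat.findGreatest Q (16 ^ n) + 1 ≤ 16 ^ n := hcard ▸ key _ hP'
  exact Nat.findGreatest_is_greatest (Nat.lt_succ_self _) hle ⟨insert u t, hP', hcard⟩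

lemma haus_singleton {d : ℝ} (hd : 0 < d) (x : Eucl n) : μH[d] ({x} : Set (Eucl n)) = 0 := by
  have h2 : dimH ({x} : Set (Eucl n)) < d.toNNReal := by
    rw [dimH_singleton]
    exact_mod_cast Real.toNNReal_pos.mpr hd
  have h3 := hausdorffMeasure_of_dimH_lt h2
  rwa [Real.coe_toNNReal d hd.le] at h3

lemma sMeasure_singleton {d : ℝ} (hd : 0 < d) (Γ : Set (Eucl n)) (hcl : IsClosed Γ) (x : Eucl n) :
    sMeasure d Γ {x} = 0 := by
  have : sMeasure d Γ {x} ≤ μH[d] ({x} : Set (Eucl n)) := by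
    rw [sMeasure, Measure.restrict_apply (measurableSet_singleton x)]
    exact measure_mono Set.inter_subset_left
  rw [haus_singleton hd x] at this
  exact le_antisymm this zero_le

lemma aux_upper (hn : 1 ≤ n) {d 𝒜 : ℝ} (hd0 : 0 < d) (h𝒜 : 1 ≤ 𝒜) {Γ : Set (Eucl n)}
    (hcl : IsClosed Γ) (hne : Γ.Nonempty) (hreg : AhlforsRegularWithin d 𝒜 Γ (EMetric.diam Γ)) :
    ∀ x ∈ Γ, ∀ r : ℝ, 0 < r → sMeasure d Γ (ball x r) ≤ ENNReal.ofReal (16 ^ n * 𝒜 * r ^ d) := by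
  intro x hx r hr
  have h16 : (1:ℝ) ≤ 16 ^ n := one_le_pow₀ (by norm_num)
  have hrd : (0:ℝ) ≤ r ^ d := Real.rpow_nonneg hr.le d
  by_cases hlt : ENNReal.ofReal r < EMetric.diam Γ
  · refine le_trans (hreg x hx r hr hlt).2 (ENNReal.ofReal_le_ofReal ?_)
    calc 𝒜 * r ^ d = 1 * (𝒜 * r ^ d) := by ring
    _ ≤ 16 ^ n * (𝒜 * r ^ d) := by
        refine mul_le_mul_of_nonneg_right h16 (by positivity)
    _ = 16 ^ n * 𝒜 * r ^ d := by ring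
  · push_neg at hlt
    have hfin : EMetric.diam Γ ≠ ⊤ := (lt_of_le_of_lt hlt ENNReal.ofReal_lt_top).ne
    by_cases hz : EMetric.diam Γ = 0
    · have hsub : Γ.Subsingleton := EMetric.diam_eq_zero_iff.mp hz
      have hΓx : Γ ⊆ {x} := fun y hy => hsub hy hx
      have : sMeasure d Γ (ball x r) ≤ μH[d] ({x} : Set (Eucl n)) := by
        rw [sMeasure, Measure.restrict_apply measurableSet_ball]
        exact measure_mono fun y hy => hΓx hy.2
      rw [haus_singleton hd0 x] at this
      exact le_trans this zero_le
    · set D := (EMetric.diam Γ).toReal with hDdef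
      have hD : 0 < D := ENNReal.toReal_pos hz hfin
      have hDr : D ≤ r := by
        have := ENNReal.toReal_mono ENNReal.ofReal_ne_top hlt
        rwa [ENNReal.toReal_ofReal hr.le] at this
      have hΓcb : Γ ⊆ closedBall x D := by
        intro y hy
        rw [mem_closedBall]
        have h1 : edist y x ≤ EMetric.diam Γ := EMetric.edist_le_diam_of_mem hy hx
        have := ENNReal.toReal_mono hfin h1
        rwa [← dist_edist] at this
      obtain ⟨t, htΓ, htc, htcov⟩ := aux_pack hn hD hΓcb
      have hcover : sMeasure d Γ (ball x r) ≤ ∑ y ∈ t, sMeasure d Γ (ball y (D / 2)) := by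
        refine le_trans ?_ (measure_biUnion_finset_le t _)
        rw [sMeasure, Measure.restrict_apply measurableSet_ball,
          Measure.restrict_apply (t.measurableSet_biUnion
            fun _ _ => measurableSet_ball)]
        exact measure_mono fun w hw => ⟨htcov hw.2, hw.2⟩
      have hone : ∀ y ∈ t, sMeasure d Γ (ball y (D / 2)) ≤ ENNReal.ofReal (𝒜 * (D / 2) ^ d) := by
        intro y hy
        refine (hreg y (htΓ hy) (D / 2) (by linarith) ?_).2
        calc ENNReal.ofReal (D / 2) < ENNReal.ofReal D := by
              rw [ENNReal.ofReal_lt_ofReal_iff hD]; linarith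
        _ = EMetric.diam Γ := by rw [hDdef, ENNReal.ofReal_toReal hfin]
      calc sMeasure d Γ (ball x r) ≤ ∑ y ∈ t, sMeasure d Γ (ball y (D / 2)) := hcover
      _ ≤ ∑ _y ∈ t, ENNReal.ofReal (𝒜 * (D / 2) ^ d) := Finset.sum_le_sum hone
      _ = (t.card : ℝ≥0∞) * ENNReal.ofReal (𝒜 * (D / 2) ^ d) := by
          rw [Finset.sum_const, nsmul_eq_mul]
      _ ≤ ENNReal.ofReal ((16:ℝ) ^ n) * ENNReal.ofReal (𝒜 * (D / 2) ^ d) := by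
          refine mul_le_mul_left ?_ _
          have h17 : ((16:ℝ) ^ n) = ((16 ^ n : ℕ) : ℝ) := by push_cast; ring
          rw [h17, ENNReal.ofReal_natCast]
          exact_mod_cast htc
      _ = ENNReal.ofReal ((16:ℝ) ^ n * (𝒜 * (D / 2) ^ d)) :=
          (ENNReal.ofReal_mul (by positivity)).symm
      _ ≤ ENNReal.ofReal (16 ^ n * 𝒜 * r ^ d) := by
          refine ENNReal.ofReal_le_ofReal ?_
          have h2 : (D / 2 : ℝ) ^ d ≤ r ^ d :=
            Real.rpow_le_rpow (by linarith) (by linarith) hd0.le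
          calc (16:ℝ) ^ n * (𝒜 * (D / 2) ^ d) = 16 ^ n * 𝒜 * (D / 2) ^ d := by ring
          _ ≤ 16 ^ n * 𝒜 * r ^ d := by
              refine mul_le_mul_of_nonneg_left h2 (by positivity)

lemma pow_div_rpow (j : ℕ) (e : ℝ) {ϱ : ℝ} (hϱ : 0 < ϱ) :
    (ϱ / 2 ^ j) ^ e = ϱ ^ e * (2:ℝ) ^ (-(j:ℝ) * e) := by
  rw [Real.div_rpow hϱ.le (by positivity), ← Real.rpow_natCast 2 j,
    ← Real.rpow_mul (by norm_num), div_eq_mul_inv, ← Real.rpow_neg (by norm_num), neg_mul]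

lemma pow_mul_rpow (j : ℕ) (e : ℝ) {ϱ : ℝ} (hϱ : 0 < ϱ) :
    ((2:ℝ) ^ j * ϱ) ^ e = ϱ ^ e * (2:ℝ) ^ ((j:ℝ) * e) := by
  rw [Real.mul_rpow (by positivity) hϱ.le, ← Real.rpow_natCast 2 j,
    ← Real.rpow_mul (by norm_num), mul_comm]

lemma geom_sum_bound (c q : ℝ) (hc : 0 ≤ c) (hq0 : 0 < q) (hq1 : q < 1) :
    ∑' j : ℕ, ENNReal.ofReal (c * q ^ j) ≤ ENNReal.ofReal (c * (1 - q)⁻¹) := by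
  have h1 : ∀ j : ℕ, ENNReal.ofReal (c * q ^ j)
      = ENNReal.ofReal c * (ENNReal.ofReal q) ^ j := by
    intro j
    rw [ENNReal.ofReal_mul hc, ENNReal.ofReal_pow hq0.le]
  rw [tsum_congr h1, ENNReal.tsum_mul_left, ENNReal.tsum_geometric]
  have h2 : (1 : ℝ≥0∞) - ENNReal.ofReal q = ENNReal.ofReal (1 - q) := by
    rw [ENNReal.ofReal_sub 1 hq0.le, ENNReal.ofReal_one]
  rw [h2, ← ENNReal.ofReal_inv_of_pos (by linarith), ← ENNReal.ofReal_mul hc]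

lemma dyadic_down (d t M : ℝ) (hd : 0 < d) (ht : 0 < t) (hM : 0 ≤ M) :
    ∃ K : ℝ, 0 < K ∧ ∀ (μ : Measure (Eucl n)) (x : Eucl n) (ϱ : ℝ), 0 < ϱ →
      (∀ r : ℝ, 0 < r → μ (ball x r) ≤ ENNReal.ofReal (M * r ^ d)) → μ {x} = 0 →
      ∫⁻ y in ball x ϱ, ENNReal.ofReal (dist x y ^ (t - d)) ∂μ
        ≤ ENNReal.ofReal (K * ϱ ^ t) := by
  have h2 : (0:ℝ) < 2 := two_pos
  have hq : (2:ℝ) ^ (-t) < 1 := Real.rpow_lt_one_of_one_lt_of_neg one_lt_two (by linarith)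
  have hq0 : (0:ℝ) < 2 ^ (-t) := Real.rpow_pos_of_pos two_pos _
  have h2d : (0:ℝ) < (2:ℝ) ^ d := Real.rpow_pos_of_pos two_pos _
  have hq1 : (0:ℝ) < 1 - 2 ^ (-t) := by linarith
  refine ⟨(M + 1) * 2 ^ d * (1 - 2 ^ (-t))⁻¹, by positivity, ?_⟩
  intro μ x ϱ hϱ hμ hx0
  set A : ℕ → Set (Eucl n) := fun j => ball x (ϱ / 2 ^ j) \ ball x (ϱ / 2 ^ (j + 1)) with hA
  have hϱt : (0:ℝ) < ϱ ^ t := Real.rpow_pos_of_pos hϱ _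
  have hcov : ball x ϱ ⊆ {x} ∪ ⋃ j, A j := by
    intro y hy
    rcases eq_or_ne y x with rfl | hyx
    · exact Or.inl rfl
    · have hpos : 0 < dist y x := dist_pos.mpr hyx
      have hmem : dist y x < ϱ := mem_ball.mp hy
      have hex : ∃ j : ℕ, ϱ / 2 ^ (j + 1) ≤ dist y x := by
        obtain ⟨j, hj⟩ := pow_unbounded_of_one_lt (ϱ / dist y x) (one_lt_two (α := ℝ))
        refine ⟨j, ?_⟩
        rw [div_le_iff₀ (by positivity)]
        rw [div_lt_iff₀ hpos] at hj
        have hmono : (2:ℝ) ^ j ≤ 2 ^ (j + 1) := by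
          apply pow_le_pow_right₀ one_le_two (Nat.le_succ j)
        nlinarith
      set j₀ := Nat.find hex with hj₀def
      have hj₀ : ϱ / 2 ^ (j₀ + 1) ≤ dist y x := Nat.find_spec hex
      have hup : dist y x < ϱ / 2 ^ j₀ := by
        rcases Nat.eq_zero_or_pos j₀ with h0 | hpos'
        · rw [h0]; simpa using hmem
        · obtain ⟨m, hm⟩ := Nat.exists_eq_succ_of_ne_zero hpos'.ne'
          have hmin := Nat.find_min hex (m := m) (by omega)
          rw [hm, Nat.succ_eq_add_one]
          linarith [not_le.mp hmin]
      refine Or.inr (mem_iUnion.mpr ⟨j₀, mem_ball.mpr hup, fun hc => ?_⟩)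
      exact absurd (mem_ball.mp hc) (not_lt.mpr hj₀)
  have hAj : ∀ j : ℕ, ∫⁻ y in A j, ENNReal.ofReal (dist x y ^ (t - d)) ∂μ
      ≤ ENNReal.ofReal ((M * 2 ^ d * ϱ ^ t) * ((2:ℝ) ^ (-t)) ^ j) := by
    intro j
    have hr1 : (0:ℝ) < ϱ / 2 ^ j := by positivity
    have hr2 : (0:ℝ) < ϱ / 2 ^ (j + 1) := by positivity
    set cj : ℝ := (ϱ / 2 ^ j) ^ t * (ϱ / 2 ^ (j + 1)) ^ (-d) with hcj
    have hcj0 : 0 ≤ cj := by positivity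
    have hmono : ∀ y ∈ A j, ENNReal.ofReal (dist x y ^ (t - d)) ≤ ENNReal.ofReal cj := by
      intro y hy
      obtain ⟨hy1, hy2⟩ := hy
      have hge : ϱ / 2 ^ (j + 1) ≤ dist x y := by
        rw [dist_comm]
        exact not_lt.mp fun h => hy2 (mem_ball.mpr h)
      have hlt' : dist x y < ϱ / 2 ^ j := by
        rw [dist_comm]; exact mem_ball.mp hy1
      refine ENNReal.ofReal_le_ofReal ?_
      have hdpos : 0 < dist x y := lt_of_lt_of_le hr2 hge
      rw [show t - d = t + -d by ring, Real.rpow_add hdpos, hcj]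
      exact mul_le_mul (Real.rpow_le_rpow hdpos.le hlt'.le ht.le)
        (Real.rpow_le_rpow_of_nonpos hr2 hge (by linarith))
        (Real.rpow_nonneg hdpos.le _) (Real.rpow_nonneg hr1.le _)
    have key : cj * (M * (ϱ / 2 ^ j) ^ d) = (M * 2 ^ d * ϱ ^ t) * ((2:ℝ) ^ (-t)) ^ j := by
      rw [hcj, pow_div_rpow j t hϱ, pow_div_rpow (j + 1) (-d) hϱ, pow_div_rpow j d hϱ,
        ← Real.rpow_natCast ((2:ℝ) ^ (-t)) j, ← Real.rpow_mul (by norm_num)]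
      push_cast
      have m1 : ϱ ^ t * ϱ ^ (-d) * ϱ ^ d = ϱ ^ t := by
        rw [mul_assoc, ← Real.rpow_add hϱ]; simp
      have m2 : (2:ℝ) ^ (-(j:ℝ) * t) * (2:ℝ) ^ (-((j:ℕ)+1:ℝ) * -d) * (2:ℝ) ^ (-(j:ℝ) * d)
          = (2:ℝ) ^ d * (2:ℝ) ^ (-t * (j:ℝ)) := by
        rw [← Real.rpow_add h2, ← Real.rpow_add h2, ← Real.rpow_add h2]
        congr 1
        push_cast
        ring
      calc ϱ ^ t * (2:ℝ) ^ (-(j:ℝ) * t) * (ϱ ^ (-d) * (2:ℝ) ^ (-((j:ℕ)+1:ℝ) * -d))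
            * (M * (ϱ ^ d * (2:ℝ) ^ (-(j:ℝ) * d)))
          = M * (ϱ ^ t * ϱ ^ (-d) * ϱ ^ d)
            * ((2:ℝ) ^ (-(j:ℝ) * t) * (2:ℝ) ^ (-((j:ℕ)+1:ℝ) * -d) * (2:ℝ) ^ (-(j:ℝ) * d)) := by
            push_cast
            ring
      _ = M * ϱ ^ t * ((2:ℝ) ^ d * (2:ℝ) ^ (-t * (j:ℝ))) := by rw [m1, m2]
      _ = M * 2 ^ d * ϱ ^ t * (2:ℝ) ^ (-t * (j:ℝ)) := by ring
    calc ∫⁻ y in A j, ENNReal.ofReal (dist x y ^ (t - d)) ∂μ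
        ≤ ∫⁻ _y in A j, ENNReal.ofReal cj ∂μ :=
          setLIntegral_mono' (measurableSet_ball.diff measurableSet_ball) hmono
    _ = ENNReal.ofReal cj * μ (A j) := setLIntegral_const _ _
    _ ≤ ENNReal.ofReal cj * ENNReal.ofReal (M * (ϱ / 2 ^ j) ^ d) :=
          mul_le_mul_right (le_trans (measure_mono Set.diff_subset) (hμ _ hr1)) _
    _ = ENNReal.ofReal (cj * (M * (ϱ / 2 ^ j) ^ d)) := (ENNReal.ofReal_mul hcj0).symm
    _ = ENNReal.ofReal ((M * 2 ^ d * ϱ ^ t) * ((2:ℝ) ^ (-t)) ^ j) := by rw [key]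
  calc ∫⁻ y in ball x ϱ, ENNReal.ofReal (dist x y ^ (t - d)) ∂μ
      ≤ ∫⁻ y in {x} ∪ ⋃ j, A j, ENNReal.ofReal (dist x y ^ (t - d)) ∂μ :=
        lintegral_mono_set hcov
  _ ≤ ∫⁻ y in ({x} : Set (Eucl n)), ENNReal.ofReal (dist x y ^ (t - d)) ∂μ
        + ∫⁻ y in ⋃ j, A j, ENNReal.ofReal (dist x y ^ (t - d)) ∂μ :=
        lintegral_union_le _ _ _
  _ ≤ 0 + ∑' j : ℕ, ∫⁻ y in A j, ENNReal.ofReal (dist x y ^ (t - d)) ∂μ := by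
        refine add_le_add ?_ (lintegral_iUnion_le _ _)
        rw [lintegral_singleton, hx0, mul_zero]
  _ ≤ ∑' j : ℕ, ENNReal.ofReal ((M * 2 ^ d * ϱ ^ t) * ((2:ℝ) ^ (-t)) ^ j) := by
        rw [zero_add]
        exact ENNReal.tsum_le_tsum hAj
  _ ≤ ENNReal.ofReal ((M * 2 ^ d * ϱ ^ t) * (1 - 2 ^ (-t))⁻¹) :=
        geom_sum_bound _ _ (by positivity) hq0 hq
  _ ≤ ENNReal.ofReal ((M + 1) * 2 ^ d * (1 - 2 ^ (-t))⁻¹ * ϱ ^ t) := by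
        refine ENNReal.ofReal_le_ofReal ?_
        have hinv : (0:ℝ) ≤ (1 - 2 ^ (-t))⁻¹ := by
          rw [inv_nonneg]; linarith
        calc M * 2 ^ d * ϱ ^ t * (1 - 2 ^ (-t))⁻¹
            ≤ (M + 1) * 2 ^ d * ϱ ^ t * (1 - 2 ^ (-t))⁻¹ := by
              have : M ≤ M + 1 := by linarith
              gcongr
        _ = (M + 1) * 2 ^ d * (1 - 2 ^ (-t))⁻¹ * ϱ ^ t := by ring

lemma dyadic_up (d t M : ℝ) (hd : 0 < d) (ht : 0 < t) (hM : 0 ≤ M) :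
    ∃ K : ℝ, 0 < K ∧ ∀ (μ : Measure (Eucl n)) (x : Eucl n) (ϱ : ℝ), 0 < ϱ →
      (∀ r : ℝ, 0 < r → μ (ball x r) ≤ ENNReal.ofReal (M * r ^ d)) →
      ∫⁻ y in (ball x ϱ)ᶜ, ENNReal.ofReal (dist x y ^ (-(d + t))) ∂μ
        ≤ ENNReal.ofReal (K * ϱ ^ (-t)) := by
  have h2 : (0:ℝ) < 2 := two_pos
  have hq : (2:ℝ) ^ (-t) < 1 := Real.rpow_lt_one_of_one_lt_of_neg one_lt_two (by linarith)
  have hq0 : (0:ℝ) < 2 ^ (-t) := Real.rpow_pos_of_pos two_pos _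
  have h2d : (0:ℝ) < (2:ℝ) ^ d := Real.rpow_pos_of_pos two_pos _
  have hq1 : (0:ℝ) < 1 - 2 ^ (-t) := by linarith
  refine ⟨(M + 1) * 2 ^ d * (1 - 2 ^ (-t))⁻¹, by positivity, ?_⟩
  intro μ x ϱ hϱ hμ
  set A : ℕ → Set (Eucl n) := fun j => ball x (2 ^ (j + 1) * ϱ) \ ball x (2 ^ j * ϱ) with hA
  have hϱt : (0:ℝ) < ϱ ^ (-t) := Real.rpow_pos_of_pos hϱ _
  have hcov : (ball x ϱ)ᶜ ⊆ ⋃ j, A j := by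
    intro y hy
    have hge0 : ϱ ≤ dist y x := not_lt.mp fun h => hy (mem_ball.mpr h)
    have hdy : 0 < dist y x := lt_of_lt_of_le hϱ hge0
    have hex : ∃ j : ℕ, dist y x < 2 ^ (j + 1) * ϱ := by
      obtain ⟨j, hj⟩ := pow_unbounded_of_one_lt (dist y x / ϱ) (one_lt_two (α := ℝ))
      refine ⟨j, ?_⟩
      rw [div_lt_iff₀ hϱ] at hj
      have hmono : (2:ℝ) ^ j ≤ 2 ^ (j + 1) := by
        apply pow_le_pow_right₀ one_le_two (Nat.le_succ j)
      nlinarith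
    set j₀ := Nat.find hex with hj₀def
    have hj₀ : dist y x < 2 ^ (j₀ + 1) * ϱ := Nat.find_spec hex
    have hlow : 2 ^ j₀ * ϱ ≤ dist y x := by
      rcases Nat.eq_zero_or_pos j₀ with h0 | hpos'
      · rw [h0]; simpa using hge0
      · obtain ⟨m, hm⟩ := Nat.exists_eq_succ_of_ne_zero hpos'.ne'
        have hmin := Nat.find_min hex (m := m) (by omega)
        rw [hm]
        exact not_lt.mp hmin
    exact mem_iUnion.mpr ⟨j₀, mem_ball.mpr hj₀, fun hc => absurd (mem_ball.mp hc) (not_lt.mpr hlow)⟩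
  have hAj : ∀ j : ℕ, ∫⁻ y in A j, ENNReal.ofReal (dist x y ^ (-(d + t))) ∂μ
      ≤ ENNReal.ofReal ((M * 2 ^ d * ϱ ^ (-t)) * ((2:ℝ) ^ (-t)) ^ j) := by
    intro j
    have hr1 : (0:ℝ) < 2 ^ j * ϱ := by positivity
    have hr2 : (0:ℝ) < 2 ^ (j + 1) * ϱ := by positivity
    set cj : ℝ := ((2:ℝ) ^ j * ϱ) ^ (-(d + t)) with hcj
    have hcj0 : 0 ≤ cj := by positivity
    have hmono : ∀ y ∈ A j, ENNReal.ofReal (dist x y ^ (-(d + t))) ≤ ENNReal.ofReal cj := by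
      intro y hy
      obtain ⟨_hy1, hy2⟩ := hy
      have hge : 2 ^ j * ϱ ≤ dist x y := by
        rw [dist_comm]
        exact not_lt.mp fun h => hy2 (mem_ball.mpr h)
      exact ENNReal.ofReal_le_ofReal
        (Real.rpow_le_rpow_of_nonpos hr1 hge (by linarith))
    have key : cj * (M * ((2:ℝ) ^ (j + 1) * ϱ) ^ d)
        = (M * 2 ^ d * ϱ ^ (-t)) * ((2:ℝ) ^ (-t)) ^ j := by
      rw [hcj, pow_mul_rpow j (-(d + t)) hϱ, pow_mul_rpow (j + 1) d hϱ,
        ← Real.rpow_natCast ((2:ℝ) ^ (-t)) j, ← Real.rpow_mul (by norm_num)]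
      push_cast
      have m1 : ϱ ^ (-(d + t)) * ϱ ^ d = ϱ ^ (-t) := by
        rw [← Real.rpow_add hϱ]; congr 1; ring
      have m2 : (2:ℝ) ^ ((j:ℝ) * -(d + t)) * (2:ℝ) ^ (((j:ℕ)+1:ℝ) * d)
          = (2:ℝ) ^ d * (2:ℝ) ^ (-t * (j:ℝ)) := by
        rw [← Real.rpow_add h2, ← Real.rpow_add h2]
        congr 1
        push_cast
        ring
      calc ϱ ^ (-(d + t)) * (2:ℝ) ^ ((j:ℝ) * -(d + t))
            * (M * (ϱ ^ d * (2:ℝ) ^ (((j:ℕ)+1:ℝ) * d)))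
          = M * (ϱ ^ (-(d + t)) * ϱ ^ d)
            * ((2:ℝ) ^ ((j:ℝ) * -(d + t)) * (2:ℝ) ^ (((j:ℕ)+1:ℝ) * d)) := by
            push_cast
            ring
      _ = M * ϱ ^ (-t) * ((2:ℝ) ^ d * (2:ℝ) ^ (-t * (j:ℝ))) := by rw [m1, m2]
      _ = M * 2 ^ d * ϱ ^ (-t) * (2:ℝ) ^ (-t * (j:ℝ)) := by ring
    calc ∫⁻ y in A j, ENNReal.ofReal (dist x y ^ (-(d + t))) ∂μ
        ≤ ∫⁻ _y in A j, ENNReal.ofReal cj ∂μ :=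
          setLIntegral_mono' (measurableSet_ball.diff measurableSet_ball) hmono
    _ = ENNReal.ofReal cj * μ (A j) := setLIntegral_const _ _
    _ ≤ ENNReal.ofReal cj * ENNReal.ofReal (M * ((2:ℝ) ^ (j + 1) * ϱ) ^ d) :=
          mul_le_mul_right (le_trans (measure_mono Set.diff_subset) (hμ _ hr2)) _
    _ = ENNReal.ofReal (cj * (M * ((2:ℝ) ^ (j + 1) * ϱ) ^ d)) := (ENNReal.ofReal_mul hcj0).symm
    _ = ENNReal.ofReal ((M * 2 ^ d * ϱ ^ (-t)) * ((2:ℝ) ^ (-t)) ^ j) := by rw [key]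
  calc ∫⁻ y in (ball x ϱ)ᶜ, ENNReal.ofReal (dist x y ^ (-(d + t))) ∂μ
      ≤ ∫⁻ y in ⋃ j, A j, ENNReal.ofReal (dist x y ^ (-(d + t))) ∂μ :=
        lintegral_mono_set hcov
  _ ≤ ∑' j : ℕ, ∫⁻ y in A j, ENNReal.ofReal (dist x y ^ (-(d + t))) ∂μ :=
        lintegral_iUnion_le _ _
  _ ≤ ∑' j : ℕ, ENNReal.ofReal ((M * 2 ^ d * ϱ ^ (-t)) * ((2:ℝ) ^ (-t)) ^ j) :=
        ENNReal.tsum_le_tsum hAj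
  _ ≤ ENNReal.ofReal ((M * 2 ^ d * ϱ ^ (-t)) * (1 - 2 ^ (-t))⁻¹) :=
        geom_sum_bound _ _ (by positivity) hq0 hq
  _ ≤ ENNReal.ofReal ((M + 1) * 2 ^ d * (1 - 2 ^ (-t))⁻¹ * ϱ ^ (-t)) := by
        refine ENNReal.ofReal_le_ofReal ?_
        have hinv : (0:ℝ) ≤ (1 - 2 ^ (-t))⁻¹ := by
          rw [inv_nonneg]; linarith
        calc M * 2 ^ d * ϱ ^ (-t) * (1 - 2 ^ (-t))⁻¹
            ≤ (M + 1) * 2 ^ d * ϱ ^ (-t) * (1 - 2 ^ (-t))⁻¹ := by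
              have : M ≤ M + 1 := by linarith
              gcongr
        _ = (M + 1) * 2 ^ d * (1 - 2 ^ (-t))⁻¹ * ϱ ^ (-t) := by ring

lemma block_eq_indicator {Γ : Set (Eucl n)} {d : ℝ} {z : Eucl n} {ϱ : ℝ} {a : Eucl n → ℝ}
    (hb : IsBlock Γ d z ϱ a) : a = Γ.indicator a := by
  funext x
  by_cases hx : x ∈ Γ
  · rw [Set.indicator_of_mem hx]
  · rw [Set.indicator_of_notMem hx, hb.1 x fun hc => hx hc.1]

lemma block_measurable {Γ : Set (Eucl n)} (hcl : IsClosed Γ) {d : ℝ} {z : Eucl n} {ϱ : ℝ}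
    {a : Eucl n → ℝ} (hb : IsBlock Γ d z ϱ a) : Measurable a := by
  classical
  have hLip : LipschitzOnWith (Real.toNNReal (ϱ ^ (-(d / 2) - 1))) a Γ := by
    refine LipschitzOnWith.of_dist_le_mul fun x hx y hy => ?_
    rw [Real.dist_eq]
    refine le_trans (hb.2.2 x hx y hy) ?_
    rw [mul_comm]
    exact mul_le_mul_of_nonneg_right (Real.le_coe_toNNReal _) dist_nonneg
  have hmeas := ContinuousOn.measurable_piecewise (g := fun _ => (0:ℝ))
    hLip.continuousOn continuousOn_const hcl.measurableSet
  have heq : Γ.piecewise a (fun _ => 0) = Γ.indicator a := by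
    funext w
    by_cases h : w ∈ Γ <;> simp [Set.piecewise, Set.indicator, h]
  rw [block_eq_indicator hb, ← heq]
  exact hmeas

lemma sMeasure_sigmaFinite (hn : 1 ≤ n) {d 𝒜 : ℝ} (hd0 : 0 < d) (h𝒜 : 1 ≤ 𝒜)
    {Γ : Set (Eucl n)} (hcl : IsClosed Γ) (hne : Γ.Nonempty)
    (hreg : AhlforsRegularWithin d 𝒜 Γ (EMetric.diam Γ)) : SigmaFinite (sMeasure d Γ) := by
  obtain ⟨x₀, hx₀⟩ := hne
  refine ⟨⟨⟨fun m => ball x₀ ((m : ℝ) + 1), fun _ => trivial, fun m => ?_, ?_⟩⟩⟩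
  · exact lt_of_le_of_lt
      (aux_upper hn hd0 h𝒜 hcl ⟨x₀, hx₀⟩ hreg x₀ hx₀ ((m : ℝ) + 1) (by positivity))
      ENNReal.ofReal_lt_top
  · ext y
    simp only [Set.mem_iUnion, mem_ball, Set.mem_univ, iff_true]
    obtain ⟨m, hm⟩ := exists_nat_gt (dist y x₀)
    exact ⟨m, by linarith⟩

lemma block_est (hn : 1 ≤ n) (d θ 𝒜 : ℝ) (hd0 : 0 < d) (hθ0 : 0 < θ) (hθ1 : θ < 1)
    (h𝒜 : 1 ≤ 𝒜) :
    ∃ C > (0:ℝ), ∀ Γ : Set (Eucl n), IsClosed Γ → Γ.Nonempty →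
      AhlforsRegularWithin d 𝒜 Γ (EMetric.diam Γ) →
      ∀ z ∈ Γ, ∀ ϱ : ℝ, 0 < ϱ → ∀ a : Eucl n → ℝ, IsBlock Γ d z ϱ a →
      ∫⁻ x, ∫⁻ y, ENNReal.ofReal (|a x - a y| / dist x y ^ (d + θ))
          ∂(sMeasure d Γ) ∂(sMeasure d Γ)
        ≤ ENNReal.ofReal (C * ϱ ^ (d / 2 - θ)) := by
  set M : ℝ := 16 ^ n * 𝒜 with hMdef
  have h16 : (1:ℝ) ≤ 16 ^ n := one_le_pow₀ (by norm_num)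
  have hM1 : 1 ≤ M := by nlinarith
  have hM0 : (0:ℝ) ≤ M := by linarith
  obtain ⟨KB, hKB, hdownP⟩ := dyadic_down (n := n) d (1 - θ) M hd0 (by linarith) hM0
  obtain ⟨KC, hKC, hupP⟩ := dyadic_up (n := n) d θ M hd0 hθ0 hM0
  have h2d : (0:ℝ) < (2:ℝ) ^ d := Real.rpow_pos_of_pos two_pos _
  have h2dθ : (0:ℝ) < (2:ℝ) ^ (d + θ) := Real.rpow_pos_of_pos two_pos _
  have h2θ : (0:ℝ) < (2:ℝ) ^ (-θ) := Real.rpow_pos_of_pos two_pos _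
  refine ⟨(KB + 2 * KC) * (M * 2 ^ d) + 2 ^ (d + θ) * M * KC * 2 ^ (-θ), by positivity, ?_⟩
  intro Γ hcl hne hreg z hz ϱ hϱ a hb
  set σ := sMeasure d Γ with hσdef
  have Γm : MeasurableSet Γ := hcl.measurableSet
  have hup : ∀ x ∈ Γ, ∀ r : ℝ, 0 < r → σ (ball x r) ≤ ENNReal.ofReal (M * r ^ d) :=
    fun x hx r hr => aux_upper hn hd0 h𝒜 hcl hne hreg x hx r hr
  have hsing : ∀ x : Eucl n, σ {x} = 0 := fun x => sMeasure_singleton hd0 Γ hcl x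
  have hσset : ∀ s : Set (Eucl n), MeasurableSet s → σ s = μH[d] (s ∩ Γ) := fun s hs => by
    rw [hσdef, sMeasure, Measure.restrict_apply hs]
  set G : Eucl n → Eucl n → ℝ≥0∞ :=
    fun x y => ENNReal.ofReal (|a x - a y| / dist x y ^ (d + θ)) with hGdef
  -- inner estimate for x ∈ Γ
  have inner1 : ∀ x ∈ Γ, ∫⁻ y, G x y ∂σ
      ≤ ENNReal.ofReal ((KB + 2 * KC) * ϱ ^ (-(d / 2) - θ)) := by
    intro x hxΓ
    have hϱc : (0:ℝ) ≤ ϱ ^ (-(d / 2) - 1) := (Real.rpow_pos_of_pos hϱ _).le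
    have hϱc2 : (0:ℝ) ≤ ϱ ^ (-(d / 2)) := (Real.rpow_pos_of_pos hϱ _).le
    have hnear : ∫⁻ y in ball x ϱ, G x y ∂σ
        ≤ ENNReal.ofReal (ϱ ^ (-(d / 2) - 1)) * ENNReal.ofReal (KB * ϱ ^ (1 - θ)) := by
      have step1 : ∫⁻ y in ball x ϱ, G x y ∂σ
          ≤ ∫⁻ y in ball x ϱ,
              ENNReal.ofReal (ϱ ^ (-(d / 2) - 1)) * ENNReal.ofReal (dist x y ^ (1 - θ - d)) ∂σ := by
        rw [hσdef, sMeasure, Measure.restrict_restrict measurableSet_ball]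
        refine setLIntegral_mono' (measurableSet_ball.inter Γm) fun y hy => ?_
        have hyΓ : y ∈ Γ := hy.2
        have habs : |a x - a y| ≤ dist x y * ϱ ^ (-(d / 2) - 1) := hb.2.2 x hxΓ y hyΓ
        rw [hGdef, ← ENNReal.ofReal_mul hϱc]
        refine ENNReal.ofReal_le_ofReal ?_
        rcases eq_or_ne (dist x y) 0 with h0 | h0
        · have : |a x - a y| ≤ 0 := by rw [h0, zero_mul] at habs; exact habs
          have hz0 : |a x - a y| = 0 := le_antisymm this (abs_nonneg _)
          rw [hz0, zero_div]
          positivity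
        · have hdp : 0 < dist x y := lt_of_le_of_ne dist_nonneg (Ne.symm h0)
          calc |a x - a y| / dist x y ^ (d + θ)
              ≤ dist x y * ϱ ^ (-(d / 2) - 1) / dist x y ^ (d + θ) := by gcongr
          _ = ϱ ^ (-(d / 2) - 1) * dist x y ^ (1 - θ - d) := by
              rw [show (1:ℝ) - θ - d = 1 - (d + θ) by ring, Real.rpow_sub hdp, Real.rpow_one]
              ring
      rw [lintegral_const_mul' _ _ ENNReal.ofReal_ne_top] at step1
      refine le_trans step1 (mul_le_mul_right ?_ _)
      exact hdownP σ x ϱ hϱ (hup x hxΓ) (hsing x)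
    have hfar : ∫⁻ y in (ball x ϱ)ᶜ, G x y ∂σ
        ≤ ENNReal.ofReal (2 * ϱ ^ (-(d / 2))) * ENNReal.ofReal (KC * ϱ ^ (-θ)) := by
      have step1 : ∫⁻ y in (ball x ϱ)ᶜ, G x y ∂σ
          ≤ ∫⁻ y in (ball x ϱ)ᶜ,
              ENNReal.ofReal (2 * ϱ ^ (-(d / 2))) * ENNReal.ofReal (dist x y ^ (-(d + θ))) ∂σ := by
        rw [hσdef, sMeasure, Measure.restrict_restrict measurableSet_ball.compl]
        refine setLIntegral_mono' (measurableSet_ball.compl.inter Γm) fun y hy => ?_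
        have hyΓ : y ∈ Γ := hy.2
        have hdge : ϱ ≤ dist x y := by
          rw [dist_comm]
          exact not_lt.mp fun h => hy.1 (mem_ball.mpr h)
        have hdp : 0 < dist x y := lt_of_lt_of_le hϱ hdge
        have habs : |a x - a y| ≤ 2 * ϱ ^ (-(d / 2)) := by
          calc |a x - a y| ≤ |a x| + |a y| := abs_sub _ _
          _ ≤ ϱ ^ (-(d / 2)) + ϱ ^ (-(d / 2)) := add_le_add (hb.2.1 x hxΓ) (hb.2.1 y hyΓ)
          _ = 2 * ϱ ^ (-(d / 2)) := by ring
        rw [hGdef, ← ENNReal.ofReal_mul (by positivity)]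
        refine ENNReal.ofReal_le_ofReal ?_
        calc |a x - a y| / dist x y ^ (d + θ)
            ≤ 2 * ϱ ^ (-(d / 2)) / dist x y ^ (d + θ) := by gcongr
        _ = 2 * ϱ ^ (-(d / 2)) * dist x y ^ (-(d + θ)) := by
            rw [Real.rpow_neg dist_nonneg, div_eq_mul_inv]
      rw [lintegral_const_mul' _ _ ENNReal.ofReal_ne_top] at step1
      refine le_trans step1 (mul_le_mul_right ?_ _)
      exact hupP σ x ϱ hϱ (hup x hxΓ)
    calc ∫⁻ y, G x y ∂σ
        = ∫⁻ y in ball x ϱ, G x y ∂σ + ∫⁻ y in (ball x ϱ)ᶜ, G x y ∂σ :=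
          (lintegral_add_compl _ measurableSet_ball).symm
    _ ≤ ENNReal.ofReal (ϱ ^ (-(d / 2) - 1)) * ENNReal.ofReal (KB * ϱ ^ (1 - θ))
          + ENNReal.ofReal (2 * ϱ ^ (-(d / 2))) * ENNReal.ofReal (KC * ϱ ^ (-θ)) :=
          add_le_add hnear hfar
    _ = ENNReal.ofReal (KB * ϱ ^ (-(d / 2) - θ)) + ENNReal.ofReal (2 * KC * ϱ ^ (-(d / 2) - θ)) := by
          rw [← ENNReal.ofReal_mul hϱc, ← ENNReal.ofReal_mul (by positivity)]
          have e1 : ϱ ^ (-(d / 2) - 1) * (KB * ϱ ^ (1 - θ)) = KB * ϱ ^ (-(d / 2) - θ) := by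
            rw [show ϱ ^ (-(d / 2) - 1) * (KB * ϱ ^ (1 - θ))
                = KB * (ϱ ^ (-(d / 2) - 1) * ϱ ^ (1 - θ)) by ring, ← Real.rpow_add hϱ,
              show -(d / 2) - 1 + (1 - θ) = -(d / 2) - θ by ring]
          have e2 : 2 * ϱ ^ (-(d / 2)) * (KC * ϱ ^ (-θ)) = 2 * KC * ϱ ^ (-(d / 2) - θ) := by
            rw [show 2 * ϱ ^ (-(d / 2)) * (KC * ϱ ^ (-θ))
                = 2 * KC * (ϱ ^ (-(d / 2)) * ϱ ^ (-θ)) by ring, ← Real.rpow_add hϱ,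
              show -(d / 2) + -θ = -(d / 2) - θ by ring]
          rw [e1, e2]
    _ = ENNReal.ofReal ((KB + 2 * KC) * ϱ ^ (-(d / 2) - θ)) := by
          rw [← ENNReal.ofReal_add (by positivity) (by positivity)]
          congr 1
          ring
  set B2 : Set (Eucl n) := ball z (2 * ϱ) with hB2def
  have hB2m : MeasurableSet B2 := measurableSet_ball
  have inner2 : ∀ x ∈ Γ, x ∉ B2 → ∫⁻ y, G x y ∂σ
      ≤ ENNReal.ofReal (2 ^ (d + θ) * M * ϱ ^ (d / 2))
          * ENNReal.ofReal (dist z x ^ (-(d + θ))) := by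
    intro x hxΓ hxB2
    have hdzx : 2 * ϱ ≤ dist x z := by
      rw [hB2def] at hxB2
      exact not_lt.mp fun h => hxB2 (mem_ball.mpr h)
    have hax : a x = 0 := hb.1 x fun hc => by
      have : dist x z < ϱ := mem_ball.mp hc.2
      linarith
    have hzero : ∫⁻ y in (ball z ϱ)ᶜ, G x y ∂σ ≤ 0 := by
      rw [hσdef, sMeasure, Measure.restrict_restrict measurableSet_ball.compl]
      refine le_trans (setLIntegral_mono' (measurableSet_ball.compl.inter Γm)
        (g := fun _ => 0) fun y hy => ?_) (by simp)
      have hay : a y = 0 := hb.1 y fun hc => hy.1 hc.2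
      simp [hGdef, hax, hay]
    have hfirst : ∫⁻ y in ball z ϱ, G x y ∂σ
        ≤ ENNReal.ofReal (ϱ ^ (-(d / 2)) * 2 ^ (d + θ) * dist z x ^ (-(d + θ))) * σ (ball z ϱ) := by
      rw [hσdef, sMeasure, Measure.restrict_restrict measurableSet_ball]
      refine le_trans (setLIntegral_mono' (measurableSet_ball.inter Γm)
        (g := fun _ => ENNReal.ofReal (ϱ ^ (-(d / 2)) * 2 ^ (d + θ) * dist z x ^ (-(d + θ))))
        fun y hy => ?_) ?_
      · have hyΓ : y ∈ Γ := hy.2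
        have hyz : dist y z < ϱ := mem_ball.mp hy.1
        have hxz2 : ϱ ≤ dist x z / 2 := by linarith
        have hxy : dist x z / 2 ≤ dist x y := by
          have htri : dist x z ≤ dist x y + dist y z := dist_triangle x y z
          linarith
        have hdp2 : (0:ℝ) < dist x z / 2 := by linarith
        have hdp : 0 < dist x y := lt_of_lt_of_le hdp2 hxy
        simp only [hGdef, hax]
        refine ENNReal.ofReal_le_ofReal ?_
        have habs : |(0:ℝ) - a y| ≤ ϱ ^ (-(d / 2)) := by
          rw [zero_sub, abs_neg]
          exact hb.2.1 y hyΓ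
        calc |(0:ℝ) - a y| / dist x y ^ (d + θ)
            ≤ ϱ ^ (-(d / 2)) / (dist x z / 2) ^ (d + θ) := by
              apply div_le_div₀ (by positivity) habs (Real.rpow_pos_of_pos hdp2 _)
              exact Real.rpow_le_rpow hdp2.le hxy (by linarith)
        _ = ϱ ^ (-(d / 2)) * 2 ^ (d + θ) * dist z x ^ (-(d + θ)) := by
            rw [dist_comm z x, Real.div_rpow dist_nonneg (by norm_num : (0:ℝ) ≤ 2),
              div_div_eq_mul_div, div_eq_mul_inv, Real.rpow_neg dist_nonneg]
      · rw [setLIntegral_const, Measure.restrict_apply measurableSet_ball]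
    calc ∫⁻ y, G x y ∂σ
        = ∫⁻ y in ball z ϱ, G x y ∂σ + ∫⁻ y in (ball z ϱ)ᶜ, G x y ∂σ :=
          (lintegral_add_compl _ measurableSet_ball).symm
    _ ≤ ENNReal.ofReal (ϱ ^ (-(d / 2)) * 2 ^ (d + θ) * dist z x ^ (-(d + θ))) * σ (ball z ϱ) + 0 :=
          add_le_add hfirst hzero
    _ ≤ ENNReal.ofReal (ϱ ^ (-(d / 2)) * 2 ^ (d + θ) * dist z x ^ (-(d + θ)))
          * ENNReal.ofReal (M * ϱ ^ d) := by
          rw [add_zero]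
          exact mul_le_mul_right (hup z hz ϱ hϱ) _
    _ = ENNReal.ofReal (2 ^ (d + θ) * M * ϱ ^ (d / 2)) * ENNReal.ofReal (dist z x ^ (-(d + θ))) := by
          rw [← ENNReal.ofReal_mul (by positivity), ← ENNReal.ofReal_mul (by positivity)]
          congr 1
          rw [show ϱ ^ (-(d / 2)) * 2 ^ (d + θ) * dist z x ^ (-(d + θ)) * (M * ϱ ^ d)
              = 2 ^ (d + θ) * M * (ϱ ^ (-(d / 2)) * ϱ ^ d) * dist z x ^ (-(d + θ)) by ring,
            ← Real.rpow_add hϱ, show -(d / 2) + d = d / 2 by ring]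
  have P1 : ∫⁻ x in B2, ∫⁻ y, G x y ∂σ ∂σ
      ≤ ENNReal.ofReal ((KB + 2 * KC) * ϱ ^ (-(d / 2) - θ)) * ENNReal.ofReal (M * (2 * ϱ) ^ d) := by
    have step : ∫⁻ x in B2, ∫⁻ y, G x y ∂σ ∂σ
        ≤ ENNReal.ofReal ((KB + 2 * KC) * ϱ ^ (-(d / 2) - θ)) * σ B2 := by
      rw [hσdef, sMeasure, Measure.restrict_restrict hB2m]
      refine le_trans (setLIntegral_mono' (hB2m.inter Γm) fun x hx => inner1 x hx.2) ?_
      rw [setLIntegral_const, Measure.restrict_apply hB2m]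
    refine le_trans step (mul_le_mul_right ?_ _)
    rw [hB2def]
    exact hup z hz (2 * ϱ) (by linarith)
  have P2 : ∫⁻ x in B2ᶜ, ∫⁻ y, G x y ∂σ ∂σ
      ≤ ENNReal.ofReal (2 ^ (d + θ) * M * ϱ ^ (d / 2)) * ENNReal.ofReal (KC * (2 * ϱ) ^ (-θ)) := by
    have step : ∫⁻ x in B2ᶜ, ∫⁻ y, G x y ∂σ ∂σ
        ≤ ∫⁻ x in B2ᶜ, ENNReal.ofReal (2 ^ (d + θ) * M * ϱ ^ (d / 2))
            * ENNReal.ofReal (dist z x ^ (-(d + θ))) ∂σ := by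
      rw [hσdef, sMeasure, Measure.restrict_restrict hB2m.compl]
      have := setLIntegral_mono' (μ := μH[d]) (hB2m.compl.inter Γm)
        (f := fun x => ∫⁻ y, G x y ∂σ)
        (g := fun x => ENNReal.ofReal (2 ^ (d + θ) * M * ϱ ^ (d / 2))
            * ENNReal.ofReal (dist z x ^ (-(d + θ))))
        fun x hx => inner2 x hx.2 hx.1
      exact le_trans this (le_of_eq (by rw [← Measure.restrict_restrict hB2m.compl]))
    rw [lintegral_const_mul' _ _ ENNReal.ofReal_ne_top] at step
    refine le_trans step (mul_le_mul_right ?_ _)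
    rw [hB2def]
    exact hupP σ z (2 * ϱ) (by linarith) (hup z hz)
  show ∫⁻ x, ∫⁻ y, G x y ∂σ ∂σ
      ≤ ENNReal.ofReal (((KB + 2 * KC) * (M * 2 ^ d) + 2 ^ (d + θ) * M * KC * 2 ^ (-θ))
          * ϱ ^ (d / 2 - θ))
  calc ∫⁻ x, ∫⁻ y, G x y ∂σ ∂σ
      = ∫⁻ x in B2, ∫⁻ y, G x y ∂σ ∂σ + ∫⁻ x in B2ᶜ, ∫⁻ y, G x y ∂σ ∂σ :=
        (lintegral_add_compl _ hB2m).symm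
  _ ≤ ENNReal.ofReal ((KB + 2 * KC) * ϱ ^ (-(d / 2) - θ)) * ENNReal.ofReal (M * (2 * ϱ) ^ d)
        + ENNReal.ofReal (2 ^ (d + θ) * M * ϱ ^ (d / 2)) * ENNReal.ofReal (KC * (2 * ϱ) ^ (-θ)) :=
        add_le_add P1 P2
  _ = ENNReal.ofReal ((KB + 2 * KC) * (M * 2 ^ d) * ϱ ^ (d / 2 - θ))
        + ENNReal.ofReal (2 ^ (d + θ) * M * KC * 2 ^ (-θ) * ϱ ^ (d / 2 - θ)) := by
        congr 1
        · rw [← ENNReal.ofReal_mul (by positivity)]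
          congr 1
          rw [Real.mul_rpow (by norm_num) hϱ.le,
            show (KB + 2 * KC) * ϱ ^ (-(d / 2) - θ) * (M * ((2:ℝ) ^ d * ϱ ^ d))
              = (KB + 2 * KC) * (M * 2 ^ d) * (ϱ ^ (-(d / 2) - θ) * ϱ ^ d) by ring,
            ← Real.rpow_add hϱ, show -(d / 2) - θ + d = d / 2 - θ by ring]
        · rw [← ENNReal.ofReal_mul (by positivity)]
          congr 1
          rw [Real.mul_rpow (by norm_num) hϱ.le,
            show 2 ^ (d + θ) * M * ϱ ^ (d / 2) * (KC * ((2:ℝ) ^ (-θ) * ϱ ^ (-θ)))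
              = 2 ^ (d + θ) * M * KC * 2 ^ (-θ) * (ϱ ^ (d / 2) * ϱ ^ (-θ)) by ring,
            ← Real.rpow_add hϱ, show d / 2 + -θ = d / 2 - θ by ring]
  _ = ENNReal.ofReal (((KB + 2 * KC) * (M * 2 ^ d) + 2 ^ (d + θ) * M * KC * 2 ^ (-θ))
        * ϱ ^ (d / 2 - θ)) := by
        rw [← ENNReal.ofReal_add (by positivity) (by positivity)]
        congr 1
        ring

lemma ennreal_sum_le_rpow (F : Finset ℕ) (u : ℕ → ℝ≥0∞) {q : ℝ} (hq : 1 ≤ q) :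
    ∑ k ∈ F, u k ^ q ≤ (∑ k ∈ F, u k) ^ q := by
  classical
  induction F using Finset.induction_on with
  | empty => simp [ENNReal.zero_rpow_of_pos (by linarith : (0:ℝ) < q)]
  | insert _ _ hx ih =>
    rw [Finset.sum_insert hx, Finset.sum_insert hx]
    exact le_trans (add_le_add_right ih _) (ENNReal.add_rpow_le_rpow_add _ _ hq)

/-- quantitative embedding of the atomic space `Ȧ^{s,p}(Γ)` into the
Slobodeckij space `Λ^{θ,1}(Γ)`, `θ = s + d - d/p`: a finite linear combination of blocks
`∑ λ_k a_k` has `Λ^{θ,1}` seminorm at most `C (∑ |λ_k|^p ϱ_k^{d - dp/2 - sp})^{1/p}`. -/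
theorem statement9
    (n : ℕ) (hn : 1 ≤ n) (d s p 𝒜 : ℝ) (hd0 : 0 < d) (hdn : d < n)
    (hs0 : 0 < s) (hs1 : s ≤ 1) (hp0 : d / (d + s) < p) (hp1 : p < 1) (h𝒜 : 1 ≤ 𝒜) :
    ∃ C > (0:ℝ), ∀ Γ : Set (Eucl n), IsClosed Γ → Γ.Nonempty →
      AhlforsRegularWithin d 𝒜 Γ (EMetric.diam Γ) →
      ∀ F : Finset ℕ, ∀ z : ℕ → Eucl n, ∀ ϱ : ℕ → ℝ, ∀ lam : ℕ → ℝ,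
        ∀ a : ℕ → Eucl n → ℝ,
        (∀ k ∈ F, z k ∈ Γ ∧ 0 < ϱ k ∧ IsBlock Γ d (z k) (ϱ k) (a k)) →
        sloboInt d (s + d - d / p) 1 (sMeasure d Γ)
            (fun x => ∑ k ∈ F, lam k * a k x) ≤
          ENNReal.ofReal
            (C * (∑ k ∈ F, |lam k| ^ p * ϱ k ^ (d - d * p / 2 - s * p)) ^ (1 / p)) := by
  have hds : 0 < d + s := by linarith
  have hp0' : 0 < p := lt_trans (div_pos hd0 hds) hp0
  have h1 : d < p * (d + s) := by
    have h := (div_lt_iff₀ hds).mp hp0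
    linarith
  have hθ0 : 0 < s + d - d / p := by
    have h2 : d / p < s + d := (div_lt_iff₀ hp0').mpr (by nlinarith)
    linarith
  have hθ1 : s + d - d / p < 1 := by
    have h3 : d < d / p := by
      rw [lt_div_iff₀ hp0']
      nlinarith
    linarith
  obtain ⟨C₂, hC₂, hblock⟩ := block_est hn d (s + d - d / p) 𝒜 hd0 hθ0 hθ1 h𝒜
  refine ⟨C₂, hC₂, ?_⟩
  intro Γ hcl hne hreg F z ϱ lam a hF
  classical
  set σ : Measure (Eucl n) := sMeasure d Γ with hσdef
  haveI : SigmaFinite σ := sMeasure_sigmaFinite hn hd0 h𝒜 hcl hne hreg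
  have hq1 : (1:ℝ) ≤ 1 / p := by
    rw [le_div_iff₀ hp0']
    linarith
  -- measurability of the per-block integrands on the product space
  have hGm : ∀ k ∈ F, Measurable (fun q : Eucl n × Eucl n =>
      ENNReal.ofReal (|lam k| * |a k q.1 - a k q.2| / dist q.1 q.2 ^ (d + (s + d - d / p)))) := by
    intro k hk
    have ham : Measurable (a k) := block_measurable hcl (hF k hk).2.2
    apply ENNReal.measurable_ofReal.comp
    apply Measurable.div
    · exact (((ham.comp measurable_fst).sub (ham.comp measurable_snd)).abs).const_mul _
    · exact measurable_dist.pow measurable_const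
  simp only [sloboInt, Real.rpow_one, one_mul]
  have hstep1 : ∀ x : Eucl n,
      (∫⁻ y, ENNReal.ofReal (|(∑ k ∈ F, lam k * a k x) - ∑ k ∈ F, lam k * a k y|
        / dist x y ^ (d + (s + d - d / p))) ∂σ)
      ≤ ∑ k ∈ F, ∫⁻ y, ENNReal.ofReal
          (|lam k| * |a k x - a k y| / dist x y ^ (d + (s + d - d / p))) ∂σ := by
    intro x
    rw [← lintegral_finset_sum' (μ := σ) F
      (f := fun k y => ENNReal.ofReal
        (|lam k| * |a k x - a k y| / dist x y ^ (d + (s + d - d / p))))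
      (fun k hk => ((hGm k hk).comp measurable_prodMk_left).aemeasurable)]
    refine lintegral_mono fun y => ?_
    have habs : |(∑ k ∈ F, lam k * a k x) - ∑ k ∈ F, lam k * a k y|
        ≤ ∑ k ∈ F, |lam k| * |a k x - a k y| := by
      rw [← Finset.sum_sub_distrib]
      refine le_trans (Finset.abs_sum_le_sum_abs _ _) (Finset.sum_le_sum fun k _ => ?_)
      rw [← mul_sub, abs_mul]
    rw [← ENNReal.ofReal_sum_of_nonneg (fun k _ => by positivity), ← Finset.sum_div]
    refine ENNReal.ofReal_le_ofReal ?_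
    rcases le_or_gt (dist x y ^ (d + (s + d - d / p))) 0 with hc | hc
    · have h0 : dist x y ^ (d + (s + d - d / p)) = 0 :=
        le_antisymm hc (Real.rpow_nonneg dist_nonneg _)
      simp [h0]
    · exact (div_le_div_iff_of_pos_right hc).mpr habs
  have hIk : ∀ k ∈ F,
      ∫⁻ x, ∫⁻ y, ENNReal.ofReal
        (|lam k| * |a k x - a k y| / dist x y ^ (d + (s + d - d / p))) ∂σ ∂σ
      ≤ ENNReal.ofReal |lam k| * ENNReal.ofReal (C₂ * ϱ k ^ (d / 2 - (s + d - d / p))) := by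
    intro k hk
    obtain ⟨hzk, hϱk, hbk⟩ := hF k hk
    have hconst : ∀ x y : Eucl n,
        ENNReal.ofReal (|lam k| * |a k x - a k y| / dist x y ^ (d + (s + d - d / p)))
        = ENNReal.ofReal |lam k|
            * ENNReal.ofReal (|a k x - a k y| / dist x y ^ (d + (s + d - d / p))) := by
      intro x y
      rw [mul_div_assoc, ENNReal.ofReal_mul (abs_nonneg _)]
    calc ∫⁻ x, ∫⁻ y, ENNReal.ofReal
          (|lam k| * |a k x - a k y| / dist x y ^ (d + (s + d - d / p))) ∂σ ∂σ
        = ∫⁻ x, ENNReal.ofReal |lam k| * ∫⁻ y, ENNReal.ofReal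
            (|a k x - a k y| / dist x y ^ (d + (s + d - d / p))) ∂σ ∂σ := by
          refine lintegral_congr fun x => ?_
          simp only [hconst]
          exact lintegral_const_mul' _ _ ENNReal.ofReal_ne_top
    _ = ENNReal.ofReal |lam k| * ∫⁻ x, ∫⁻ y, ENNReal.ofReal
            (|a k x - a k y| / dist x y ^ (d + (s + d - d / p))) ∂σ ∂σ :=
          lintegral_const_mul' _ _ ENNReal.ofReal_ne_top
    _ ≤ ENNReal.ofReal |lam k| * ENNReal.ofReal (C₂ * ϱ k ^ (d / 2 - (s + d - d / p))) :=
          mul_le_mul_right (hblock Γ hcl hne hreg (z k) hzk (ϱ k) hϱk (a k) hbk) _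
  have hfinal : ∑ k ∈ F, ENNReal.ofReal |lam k|
        * ENNReal.ofReal (C₂ * ϱ k ^ (d / 2 - (s + d - d / p)))
      ≤ ENNReal.ofReal (C₂ * (∑ k ∈ F, |lam k| ^ p * ϱ k ^ (d - d * p / 2 - s * p)) ^ (1 / p)) := by
    have hterm : ∀ k ∈ F, ENNReal.ofReal |lam k|
          * ENNReal.ofReal (C₂ * ϱ k ^ (d / 2 - (s + d - d / p)))
        = ENNReal.ofReal C₂
            * ENNReal.ofReal (|lam k| * ϱ k ^ (d / 2 - (s + d - d / p))) := by
      intro k hk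
      rw [← ENNReal.ofReal_mul (abs_nonneg _), ← ENNReal.ofReal_mul hC₂.le]
      congr 1
      ring
    rw [Finset.sum_congr rfl hterm, ← Finset.mul_sum]
    have hux : ∀ k ∈ F, ENNReal.ofReal (|lam k| * ϱ k ^ (d / 2 - (s + d - d / p)))
        = (ENNReal.ofReal (|lam k| ^ p * ϱ k ^ (d - d * p / 2 - s * p))) ^ (1 / p) := by
      intro k hk
      obtain ⟨_, hϱk, _⟩ := hF k hk
      have hu0 : (0:ℝ) ≤ |lam k| * ϱ k ^ (d / 2 - (s + d - d / p)) := by positivity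
      have hep : (d / 2 - (s + d - d / p)) * p = d - d * p / 2 - s * p := by
        field_simp
        ring
      have hupow : (|lam k| * ϱ k ^ (d / 2 - (s + d - d / p))) ^ p
          = |lam k| ^ p * ϱ k ^ (d - d * p / 2 - s * p) := by
        rw [Real.mul_rpow (abs_nonneg _) (Real.rpow_nonneg hϱk.le _),
          ← Real.rpow_mul hϱk.le, hep]
      rw [← hupow, ← ENNReal.ofReal_rpow_of_nonneg hu0 hp0'.le, ← ENNReal.rpow_mul,
        mul_one_div, div_self hp0'.ne', ENNReal.rpow_one]
    rw [Finset.sum_congr rfl hux, ENNReal.ofReal_mul hC₂.le]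
    refine mul_le_mul_right ?_ _
    refine le_trans (ennreal_sum_le_rpow F _ hq1) ?_
    have hnn : ∀ k ∈ F, (0:ℝ) ≤ |lam k| ^ p * ϱ k ^ (d - d * p / 2 - s * p) :=
      fun k hk => mul_nonneg (Real.rpow_nonneg (abs_nonneg _) _)
        (Real.rpow_nonneg (hF k hk).2.1.le _)
    rw [← ENNReal.ofReal_sum_of_nonneg hnn,
      ENNReal.ofReal_rpow_of_nonneg (Finset.sum_nonneg hnn) (by positivity)]
  calc ∫⁻ x, ∫⁻ y, ENNReal.ofReal (|(∑ k ∈ F, lam k * a k x) - ∑ k ∈ F, lam k * a k y|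
        / dist x y ^ (d + (s + d - d / p))) ∂σ ∂σ
      ≤ ∫⁻ x, ∑ k ∈ F, ∫⁻ y, ENNReal.ofReal
          (|lam k| * |a k x - a k y| / dist x y ^ (d + (s + d - d / p))) ∂σ ∂σ :=
        lintegral_mono hstep1
  _ = ∑ k ∈ F, ∫⁻ x, ∫⁻ y, ENNReal.ofReal
        (|lam k| * |a k x - a k y| / dist x y ^ (d + (s + d - d / p))) ∂σ ∂σ :=
        lintegral_finset_sum' F fun k hk => ((hGm k hk).lintegral_prod_right').aemeasurable
  _ ≤ ∑ k ∈ F, ENNReal.ofReal |lam k| * ENNReal.ofReal (C₂ * ϱ k ^ (d / 2 - (s + d - d / p))) :=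
        Finset.sum_le_sum hIk
  _ ≤ ENNReal.ofReal (C₂ * (∑ k ∈ F, |lam k| ^ p * ϱ k ^ (d - d * p / 2 - s * p)) ^ (1 / p)) :=
        hfinal


end
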